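/- arXiv:1602.08219 — 3 statements merged into one kernel-verified Lean document; each statement's English description precedes it below -/
import Mathlib

section
/- Let d ≥ 2 be an integer. For every polynomial P with complex coefficients there exist a unique polynomial Q with complex coefficients and a unique polynomial R with complex coefficients of degree at most d−2 such that P = Q' + d·X^{d−1}·Q + R. Equivalently, ℂ[z]e^{z^d} dz = d(ℂ[z]e^{z^d}) ⊕ ⊕_{j=0}^{d−2} ℂ·z^{j}e^{z^d} dz. -/
open Polynomial

private lemma T_degree (d : ℕ) (hd : 2 ≤ d) (Q : Polynomial ℂ) (hQ : Q ≠ 0) :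
    (derivative Q + C (d : ℂ) * X ^ (d - 1) * Q).degree = Q.degree + (d - 1 : ℕ) := by
  have hd0 : (d : ℂ) ≠ 0 := Nat.cast_ne_zero.mpr (by omega)
  have h1 : (C (d : ℂ) * X ^ (d - 1) * Q).degree = Q.degree + (d - 1 : ℕ) := by
    rw [degree_mul, degree_C_mul_X_pow _ hd0, add_comm]
  have h2 : (derivative Q).degree < (C (d : ℂ) * X ^ (d - 1) * Q).degree := by
    rw [h1]
    calc (derivative Q).degree < Q.degree := degree_derivative_lt hQ
    _ ≤ Q.degree + (d - 1 : ℕ) := le_add_of_nonneg_right (by exact_mod_cast Nat.zero_le _)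
  rw [degree_add_eq_right_of_degree_lt h2, h1]

private lemma exists_dec (d : ℕ) (hd : 2 ≤ d) :
    ∀ n (P : Polynomial ℂ), P.natDegree ≤ n →
      ∃ Q R : Polynomial ℂ, R.degree ≤ (d - 2 : ℕ) ∧
        P = derivative Q + C (d : ℂ) * X ^ (d - 1) * Q + R := by
  intro n
  induction n using Nat.strong_induction_on with
  | _ n ih =>
    intro P hPn
    by_cases h : P.degree ≤ (d - 2 : ℕ)
    · exact ⟨0, P, h, by simp⟩
    · push_neg at h
      have hP0 : P ≠ 0 := by
        intro h0; rw [h0, degree_zero] at h; exact absurd h (by simp)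
      have hdeg : d - 1 ≤ P.natDegree := by
        have := (degree_eq_natDegree hP0) ▸ h
        have : (d - 2 : ℕ) < P.natDegree := by exact_mod_cast this
        omega
      set N := P.natDegree with hN
      set m := N - (d - 1) with hm
      have hmN : m + (d - 1) = N := by omega
      set c := P.leadingCoeff / (d : ℂ) with hc
      have hd0 : (d : ℂ) ≠ 0 := Nat.cast_ne_zero.mpr (by omega)
      have hcd : (d : ℂ) * c = P.leadingCoeff := by
        rw [hc]; field_simp
      set Q₀ : Polynomial ℂ := C c * X ^ m with hQ₀
      have hTQ₀ : C (d : ℂ) * X ^ (d - 1) * Q₀ = C P.leadingCoeff * X ^ N := by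
        rw [hQ₀, show C (d : ℂ) * X ^ (d - 1) * (C c * X ^ m)
            = C ((d : ℂ) * c) * X ^ (m + (d - 1)) by rw [C_mul, pow_add]; ring, hcd, hmN]
      set P' := P - (derivative Q₀ + C (d : ℂ) * X ^ (d - 1) * Q₀) with hP'
      have hQ₀deg : Q₀.degree ≤ (m : WithBot ℕ) := by
        rw [hQ₀]
        calc (C c * X ^ m).degree ≤ (C c).degree + (X ^ m : Polynomial ℂ).degree :=
              degree_mul_le _ _
        _ ≤ 0 + (m : WithBot ℕ) := add_le_add degree_C_le (le_of_eq (degree_X_pow m))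
        _ = m := zero_add _
      have hderiv : (derivative Q₀).degree < (N : WithBot ℕ) := by
        refine lt_of_le_of_lt (le_trans degree_derivative_le hQ₀deg) ?_
        exact_mod_cast (by omega : m < N)
      have hP'deg : P'.degree < P.degree := by
        rw [hP', hTQ₀, show P - (derivative Q₀ + C P.leadingCoeff * X ^ N)
            = (P - C P.leadingCoeff * X ^ N) - derivative Q₀ by ring]
        rw [degree_eq_natDegree hP0]
        apply lt_of_le_of_lt (degree_sub_le _ _)
        apply max_lt _ hderiv
        · have := Polynomial.degree_sub_lt (p := P) (q := C P.leadingCoeff * X ^ N) ?_ hP0 ?_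
          · rwa [degree_eq_natDegree hP0] at this
          · rw [degree_eq_natDegree hP0, degree_C_mul_X_pow _ (leadingCoeff_ne_zero.mpr hP0)]
          · rw [leadingCoeff_C_mul_X_pow]
      by_cases hP'0 : P' = 0
      · refine ⟨Q₀, 0, by simp, ?_⟩
        have : P = derivative Q₀ + C (d : ℂ) * X ^ (d - 1) * Q₀ := by
          have := sub_eq_zero.mp (hP' ▸ hP'0)
          linear_combination this
        rw [this]; ring
      · have hlt : P'.natDegree < n := by
          have h1 : P'.natDegree < P.natDegree :=
            natDegree_lt_natDegree hP'0 hP'deg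
          omega
        obtain ⟨Q₁, R, hR, hEq⟩ := ih P'.natDegree hlt P' le_rfl
        refine ⟨Q₀ + Q₁, R, hR, ?_⟩
        have : P = P' + (derivative Q₀ + C (d : ℂ) * X ^ (d - 1) * Q₀) := by
          rw [hP']; ring
        rw [this, hEq, derivative_add]; ring

/-- For `d ≥ 2`, every polynomial `P ∈ ℂ[X]` is uniquely `P = Q' + d X^(d-1) Q + R`
with `Q, R ∈ ℂ[X]` and `deg R ≤ d - 2`; i.e.
`ℂ[z]e^{z^d} dz = d(ℂ[z]e^{z^d}) ⊕ ⊕_{j=0}^{d-2} ℂ·z^j e^{z^d} dz`. -/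
theorem poly_exp_decomposition (d : ℕ) (hd : 2 ≤ d) (P : Polynomial ℂ) :
    ∃! QR : Polynomial ℂ × Polynomial ℂ,
      QR.2.degree ≤ (d - 2 : ℕ) ∧
      P = Polynomial.derivative QR.1
            + Polynomial.C (d : ℂ) * Polynomial.X ^ (d - 1) * QR.1 + QR.2 := by
  obtain ⟨Q, R, hR, hEq⟩ := exists_dec d hd P.natDegree P le_rfl
  refine ⟨(Q, R), ⟨hR, hEq⟩, ?_⟩
  rintro ⟨Q', R'⟩ ⟨hR', hEq'⟩
  have key : ∀ (A B : Polynomial ℂ), A.degree ≤ (d - 2 : ℕ) → B.degree ≤ (d - 2 : ℕ) →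
      ∀ (U V : Polynomial ℂ),
      derivative U + C (d : ℂ) * X ^ (d - 1) * U + A
        = derivative V + C (d : ℂ) * X ^ (d - 1) * V + B → U = V := by
    intro A B hA hB U V hUV
    by_contra hne
    have hW : U - V ≠ 0 := sub_ne_zero.mpr hne
    have hT : derivative (U - V) + C (d : ℂ) * X ^ (d - 1) * (U - V) = B - A := by
      rw [derivative_sub]; linear_combination hUV
    have h1 := T_degree d hd (U - V) hW
    have h2 : (B - A).degree ≤ (d - 2 : ℕ) :=
      le_trans (degree_sub_le _ _) (max_le hB hA)
    rw [← hT, h1] at h2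
    have h3 : ((d - 1 : ℕ) : WithBot ℕ) ≤ (U - V).degree + (d - 1 : ℕ) := by
      have : (0 : WithBot ℕ) ≤ (U - V).degree := zero_le_degree_iff.mpr hW
      calc ((d - 1 : ℕ) : WithBot ℕ) = 0 + (d - 1 : ℕ) := by simp
      _ ≤ (U - V).degree + (d - 1 : ℕ) := by gcongr
    have : ((d - 1 : ℕ) : WithBot ℕ) ≤ ((d - 2 : ℕ) : WithBot ℕ) := le_trans h3 h2
    have : (d - 1 : ℕ) ≤ (d - 2 : ℕ) := by exact_mod_cast this
    omega
  have h2 : derivative Q' + C (d : ℂ) * X ^ (d - 1) * Q' + R'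
      = derivative Q + C (d : ℂ) * X ^ (d - 1) * Q + R := hEq'.symm.trans hEq
  have hQ : Q' = Q := key R' R hR' hR Q' Q h2
  have hRR : R' = R := by
    rw [hQ] at h2
    exact add_left_cancel h2
  simp [hQ, hRR]
end

section
/- Let d ≥ 1 be an integer. For every Laurent polynomial g (i.e. a finite linear combination of integer powers z^{j}, j ∈ ℤ, with complex coefficients, viewed as a function on ℂ ∖ {0}) there exist a unique Laurent polynomial f and unique complex constants c_{−1}, c_{0}, …, c_{d−2} such that g(z) = f'(z) + d·z^{d−1}·f(z) + Σ_{j=−1}^{d−2} c_j z^{j} for all z ≠ 0. Equivalently, ℂ[z,1/z]e^{z^d} dz = d(ℂ[z,1/z]e^{z^d}) ⊕ ⊕_{j=−1}^{d−2} ℂ·z^{j}e^{z^d} dz. -/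
open Finset

noncomputable section LaurentExpAux

namespace LaurentExpAux

/-- Evaluation of a Laurent polynomial (coefficient finsupp) at `z`. -/
def Ev (z : ℂ) : (ℤ →₀ ℂ) →ₗ[ℂ] ℂ :=
  Finsupp.lsum ℂ fun j => LinearMap.toSpanSingleton ℂ ℂ (z ^ j)

lemma Ev_apply (z : ℂ) (a : ℤ →₀ ℂ) : Ev z a = ∑ j ∈ a.support, a j * z ^ j := by
  classical
  simp [Ev, Finsupp.lsum, Finsupp.sum, LinearMap.toSpanSingleton, smul_eq_mul]

lemma Ev_single (z : ℂ) (m : ℤ) (c : ℂ) : Ev z (Finsupp.single m c) = c * z ^ m := by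
  rw [Ev, Finsupp.lsum_single]
  simp [LinearMap.toSpanSingleton, smul_eq_mul]

/-- The operator `f ↦ f' + d z^(d-1) f` on coefficients. -/
def L (d : ℕ) : (ℤ →₀ ℂ) →ₗ[ℂ] (ℤ →₀ ℂ) :=
  Finsupp.lsum ℂ fun j =>
    (j : ℂ) • Finsupp.lsingle (j - 1) + (d : ℂ) • Finsupp.lsingle (j + d - 1)

lemma L_single (d : ℕ) (j : ℤ) (c : ℂ) :
    L d (Finsupp.single j c) =
      Finsupp.single (j - 1) ((j : ℂ) * c) + Finsupp.single (j + d - 1) ((d : ℂ) * c) := by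
  rw [L, Finsupp.lsum_single, LinearMap.add_apply, LinearMap.smul_apply,
    LinearMap.smul_apply, Finsupp.lsingle_apply, Finsupp.lsingle_apply,
    Finsupp.smul_single', Finsupp.smul_single']

lemma L_apply (d : ℕ) (f : ℤ →₀ ℂ) (k : ℤ) :
    L d f k = ((k + 1 : ℤ) : ℂ) * f (k + 1) + (d : ℂ) * f (k + 1 - d) := by
  induction f using Finsupp.induction_linear with
  | zero => simp
  | add f g hf hg =>
    rw [map_add, Finsupp.add_apply, hf, hg, Finsupp.add_apply, Finsupp.add_apply]
    ring
  | single j c =>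
    have h1 : (j - 1 = k) ↔ (j = k + 1) := by omega
    have h2 : (j + (d : ℤ) - 1 = k) ↔ (j = k + 1 - d) := by omega
    rw [L_single, Finsupp.add_apply, Finsupp.single_apply, Finsupp.single_apply,
      Finsupp.single_apply, Finsupp.single_apply]
    simp only [h1, h2]
    split_ifs with hA hB <;> subst_vars <;> push_cast <;> ring

lemma Ev_L (d : ℕ) (hd : 1 ≤ d) (f : ℤ →₀ ℂ) (z : ℂ) (hz : z ≠ 0) :
    Ev z (L d f) =
      deriv (fun w : ℂ => ∑ j ∈ f.support, f j * w ^ j) z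
        + (d : ℂ) * z ^ (d - 1) * Ev z f := by
  have hder : HasDerivAt (fun w : ℂ => ∑ j ∈ f.support, f j * w ^ j)
      (∑ j ∈ f.support, f j * ((j : ℂ) * z ^ (j - 1))) z :=
    HasDerivAt.fun_sum fun j _ => (hasDerivAt_zpow j z (Or.inl hz)).const_mul (f j)
  have hz1 : ∀ j : ℤ, z ^ (j + (d : ℤ) - 1) = z ^ j * z ^ (d - 1 : ℕ) := by
    intro j
    have h1 : ((d - 1 : ℕ) : ℤ) = (d : ℤ) - 1 := by omega
    rw [← zpow_natCast z (d - 1), h1, ← zpow_add₀ hz]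
    congr 1
    ring
  have hL : Ev z (L d f) = ∑ j ∈ f.support,
      ((j : ℂ) * (f j * z ^ (j - 1)) + (d : ℂ) * (f j * z ^ (j + (d : ℤ) - 1))) := by
    rw [L, Finsupp.lsum_apply, map_finsuppSum, Finsupp.sum]
    refine Finset.sum_congr rfl fun j _ => ?_
    rw [LinearMap.add_apply, LinearMap.smul_apply, LinearMap.smul_apply,
      Finsupp.lsingle_apply, Finsupp.lsingle_apply, map_add, map_smul, map_smul,
      Ev_single, Ev_single, smul_eq_mul, smul_eq_mul]
  rw [hL, hder.deriv, Ev_apply, Finset.sum_add_distrib, Finset.mul_sum]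
  congr 1
  · exact Finset.sum_congr rfl fun j _ => by ring
  · refine Finset.sum_congr rfl fun j _ => ?_
    rw [hz1 j]
    ring

/-- Extraction: a Laurent polynomial vanishing on `ℂ \ {0}` is zero. -/
lemma Ev_eq_zero {a : ℤ →₀ ℂ} (h : ∀ z : ℂ, z ≠ 0 → Ev z a = 0) : a = 0 := by
  classical
  by_contra ha
  obtain ⟨N, hN⟩ : ∃ N : ℕ, ∀ j ∈ a.support, -(N : ℤ) ≤ j := by
    rcases Finset.eq_empty_or_nonempty a.support with he | hne
    · exact ⟨0, fun j hj => by simp [he] at hj⟩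
    · refine ⟨(a.support.min' hne).natAbs, fun j hj => ?_⟩
      have := a.support.min'_le j hj
      omega
  set P : Polynomial ℂ := ∑ j ∈ a.support, Polynomial.C (a j) * Polynomial.X ^ (j + N).toNat
    with hP
  have hPeval : ∀ z : ℂ, z ≠ 0 → P.eval z = z ^ (N : ℕ) * Ev z a := by
    intro z hz
    rw [hP, Polynomial.eval_finset_sum, Ev_apply, Finset.mul_sum]
    refine Finset.sum_congr rfl fun j hj => ?_
    have hj0 : (0 : ℤ) ≤ j + N := by have := hN j hj; omega
    rw [Polynomial.eval_mul, Polynomial.eval_C, Polynomial.eval_pow, Polynomial.eval_X]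
    have : (z ^ (j + N).toNat : ℂ) = z ^ (j + (N : ℤ)) := by
      rw [← zpow_natCast z, Int.toNat_of_nonneg hj0]
    rw [this, zpow_add₀ hz, ← zpow_natCast z N]
    ring
  have hP0 : P = 0 := by
    refine Polynomial.eq_zero_of_infinite_isRoot P ?_
    refine Set.Infinite.mono (s := {(0 : ℂ)}ᶜ) ?_ ?_
    · intro z hz
      simp only [Set.mem_compl_iff, Set.mem_singleton_iff] at hz
      simp [Polynomial.IsRoot, hPeval z hz, h z hz]
    · exact Set.Finite.infinite_compl (Set.finite_singleton 0)
  obtain ⟨k, hk⟩ := Finsupp.ne_iff.mp ha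
  rw [Finsupp.coe_zero, Pi.zero_apply] at hk
  have hks : k ∈ a.support := Finsupp.mem_support_iff.mpr hk
  have hco : P.coeff (k + N).toNat = a k := by
    rw [hP, Polynomial.finset_sum_coeff]
    rw [Finset.sum_eq_single k]
    · rw [Polynomial.coeff_C_mul, Polynomial.coeff_X_pow, if_pos rfl, mul_one]
    · intro j hj hjk
      rw [Polynomial.coeff_C_mul, Polynomial.coeff_X_pow, if_neg, mul_zero]
      have h1 := hN j hj
      have h2 := hN k hks
      omega
    · intro hk'
      exact absurd hks hk'
  rw [hP0] at hco
  simp at hco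
  exact hk hco.symm

lemma L_inj (d : ℕ) (hd : 1 ≤ d) {f c : ℤ →₀ ℂ}
    (hc : c.support ⊆ Finset.Icc (-1 : ℤ) ((d : ℤ) - 2)) (h : L d f + c = 0) :
    f = 0 ∧ c = 0 := by
  classical
  have hf : f = 0 := by
    by_contra hf0
    have hne : f.support.Nonempty := Finsupp.support_nonempty_iff.mpr hf0
    have hcoeff : ∀ k : ℤ, ((k + 1 : ℤ) : ℂ) * f (k + 1) + (d : ℂ) * f (k + 1 - d) + c k = 0 := by
      intro k
      have := congrArg (fun x : ℤ →₀ ℂ => x k) h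
      simpa [L_apply, Finsupp.add_apply] using this
    have hcout : ∀ k : ℤ, k < -1 ∨ (d : ℤ) - 2 < k → c k = 0 := by
      intro k hk
      by_contra hck
      have := hc (Finsupp.mem_support_iff.mpr hck)
      rw [Finset.mem_Icc] at this
      omega
    set M := f.support.max' hne with hM
    have hMs : M ∈ f.support := f.support.max'_mem hne
    have hfM : f M ≠ 0 := Finsupp.mem_support_iff.mp hMs
    by_cases hM0 : 0 ≤ M
    · -- look at coefficient M + d - 1
      have h1 := hcoeff (M + d - 1)
      have e1 : M + (d : ℤ) - 1 + 1 = M + d := by ring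
      rw [e1] at h1
      have e2 : M + (d : ℤ) - (d : ℤ) = M := by ring
      rw [e2] at h1
      have hfMd : f (M + d) = 0 := by
        apply Finsupp.notMem_support_iff.mp
        intro hmem
        have := f.support.le_max' _ hmem
        omega
      have hcM : c (M + d - 1) = 0 := hcout _ (by omega)
      rw [hfMd, mul_zero, hcM, zero_add, add_zero] at h1
      have hd0 : (d : ℂ) ≠ 0 := Nat.cast_ne_zero.mpr (by omega)
      exact hfM ((mul_eq_zero.mp h1).resolve_left hd0)
    · -- min m < 0, look at coefficient m - 1
      set m := f.support.min' hne with hm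
      have hms : m ∈ f.support := f.support.min'_mem hne
      have hfm : f m ≠ 0 := Finsupp.mem_support_iff.mp hms
      have hmM : m ≤ M := f.support.min'_le _ hMs
      have h1 := hcoeff (m - 1)
      have e1 : m - 1 + 1 = m := by ring
      rw [e1] at h1
      have hfmd : f (m - d) = 0 := by
        apply Finsupp.notMem_support_iff.mp
        intro hmem
        have := f.support.min'_le _ hmem
        omega
      have hcm : c (m - 1) = 0 := hcout _ (by omega)
      rw [hfmd, mul_zero, hcm, add_zero, add_zero] at h1
      have hm0 : ((m : ℂ)) ≠ 0 := by
        exact_mod_cast (by omega : (m : ℤ) ≠ 0)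
      exact hfm ((mul_eq_zero.mp h1).resolve_left hm0)
  refine ⟨hf, ?_⟩
  rw [hf, map_zero, zero_add] at h
  exact h

/-- Recursive solution for a single monomial `z^k`. -/
def r (d : ℕ) (hd : 1 ≤ d) (k : ℤ) : (ℤ →₀ ℂ) × (ℤ →₀ ℂ) :=
  if h1 : (d : ℤ) - 1 ≤ k then
    ((d : ℂ)⁻¹ • Finsupp.single (k - d + 1) 1
        - (((k - d + 1 : ℤ) : ℂ) / d) • (r d hd (k - d)).1,
      -(((k - d + 1 : ℤ) : ℂ) / d) • (r d hd (k - d)).2)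
  else if h2 : k ≤ -2 then
    ((((k + 1 : ℤ) : ℂ))⁻¹ • Finsupp.single (k + 1) 1
        - ((d : ℂ) / ((k + 1 : ℤ) : ℂ)) • (r d hd (k + d)).1,
      -((d : ℂ) / ((k + 1 : ℤ) : ℂ)) • (r d hd (k + d)).2)
  else (0, Finsupp.single k 1)
termination_by (k - ((d : ℤ) - 2)).toNat + (-1 - k).toNat
decreasing_by all_goals omega

lemma r_spec (d : ℕ) (hd : 1 ≤ d) (k : ℤ) :
    (r d hd k).2.support ⊆ Finset.Icc (-1 : ℤ) ((d : ℤ) - 2) ∧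
      L d (r d hd k).1 + (r d hd k).2 = Finsupp.single k 1 := by
  have hd0 : (d : ℂ) ≠ 0 := Nat.cast_ne_zero.mpr (by omega)
  have hgen : ∀ (m : ℤ) (c : ℂ), Finsupp.single m c = c • Finsupp.single m (1 : ℂ) := by
    intro m c
    rw [Finsupp.smul_single, smul_eq_mul, mul_one]
  rw [r]
  split_ifs with h1 h2
  · obtain ⟨ihs, ih2⟩ := r_spec d hd (k - d)
    refine ⟨(Finsupp.support_smul).trans ihs, ?_⟩
    have hp2 : (r d hd (k - d)).2 =
        Finsupp.single (k - d) 1 - L d (r d hd (k - d)).1 := eq_sub_of_add_eq' ih2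
    rw [map_sub, map_smul, map_smul, L_single, hp2]
    have e : k - (d : ℤ) + 1 + (d : ℤ) - 1 = k := by ring
    have e2 : k - (d : ℤ) + 1 - 1 = k - (d : ℤ) := by ring
    rw [e, e2, hgen (k - (d : ℤ)) (((k - (d : ℤ) + 1 : ℤ) : ℂ) * 1),
      hgen k ((d : ℂ) * 1)]
    match_scalars <;> field_simp <;> ring
  · obtain ⟨ihs, ih2⟩ := r_spec d hd (k + d)
    refine ⟨(Finsupp.support_smul).trans ihs, ?_⟩
    have hp2 : (r d hd (k + d)).2 =
        Finsupp.single (k + d) 1 - L d (r d hd (k + d)).1 := eq_sub_of_add_eq' ih2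
    rw [map_sub, map_smul, map_smul, L_single, hp2]
    have e : k + 1 + (d : ℤ) - 1 = k + (d : ℤ) := by ring
    have e2 : k + 1 - 1 = k := by ring
    rw [e, e2, hgen k (((k + 1 : ℤ) : ℂ) * 1), hgen (k + (d : ℤ)) ((d : ℂ) * 1)]
    have hk1 : ((k : ℂ) + 1) ≠ 0 := by
      have : ((k + 1 : ℤ) : ℂ) ≠ 0 := by
        exact_mod_cast (by omega : (k + 1 : ℤ) ≠ 0)
      push_cast at this
      exact this
    match_scalars <;> field_simp <;> ring
  · refine ⟨?_, ?_⟩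
    · intro x hx
      have := Finsupp.support_single_subset hx
      simp only [Finset.mem_singleton] at this
      subst this
      rw [Finset.mem_Icc]
      omega
    · rw [map_zero, zero_add]
termination_by (k - ((d : ℤ) - 2)).toNat + (-1 - k).toNat
decreasing_by all_goals omega

end LaurentExpAux

end LaurentExpAux

open Finset

/-- For `d ≥ 1`, every Laurent polynomial `g` (given by its finitely supported
coefficient function `g : ℤ →₀ ℂ`, viewed as the function `z ↦ ∑ g j * z^j` on `ℂ \ {0}`)
can be written uniquely as `g(z) = f'(z) + d z^(d-1) f(z) + ∑_{j=-1}^{d-2} c_j z^j` for all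
`z ≠ 0`, with `f` a Laurent polynomial and `c_j ∈ ℂ`; i.e.
`ℂ[z,1/z]e^{z^d} dz = d(ℂ[z,1/z]e^{z^d}) ⊕ ⊕_{j=-1}^{d-2} ℂ·z^j e^{z^d} dz`. -/
theorem laurent_exp_decomposition (d : ℕ) (hd : 1 ≤ d) (g : ℤ →₀ ℂ) :
    ∃! p : (ℤ →₀ ℂ) × (ℤ →₀ ℂ),
      p.2.support ⊆ Finset.Icc (-1 : ℤ) ((d : ℤ) - 2) ∧
      ∀ z : ℂ, z ≠ 0 →
        (∑ j ∈ g.support, g j * z ^ j) =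
          deriv (fun w : ℂ => ∑ j ∈ p.1.support, p.1 j * w ^ j) z
            + (d : ℂ) * z ^ (d - 1) * (∑ j ∈ p.1.support, p.1 j * z ^ j)
            + ∑ j ∈ p.2.support, p.2 j * z ^ j := by
  classical
  open LaurentExpAux in
  set F : ℤ →₀ ℂ := g.sum fun k a => a • (r d hd k).1 with hF
  set C : ℤ →₀ ℂ := g.sum fun k a => a • (r d hd k).2 with hCdef
  have hC : C.support ⊆ Finset.Icc (-1 : ℤ) ((d : ℤ) - 2) := by
    refine Finsupp.support_sum.trans ?_
    intro x hx
    rw [Finset.mem_biUnion] at hx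
    obtain ⟨k, hk, hx⟩ := hx
    exact (r_spec d hd k).1 (Finsupp.support_smul hx)
  have hFC : L d F + C = g := by
    have h1 : L d F = g.sum fun k a => a • L d (r d hd k).1 := by
      rw [hF, map_finsuppSum]
      exact Finsupp.sum_congr fun k _ => by rw [map_smul]
    rw [h1, hCdef, ← Finsupp.sum_add]
    have h2 : (g.sum fun k a => a • L d (r d hd k).1 + a • (r d hd k).2)
        = g.sum fun k a => Finsupp.single k a := by
      refine Finsupp.sum_congr fun k hk => ?_
      rw [← smul_add, (r_spec d hd k).2, Finsupp.smul_single, smul_eq_mul, mul_one]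
    rw [h2, Finsupp.sum_single]
  have key : ∀ (p : (ℤ →₀ ℂ) × (ℤ →₀ ℂ)) (z : ℂ), z ≠ 0 →
      (deriv (fun w : ℂ => ∑ j ∈ p.1.support, p.1 j * w ^ j) z
        + (d : ℂ) * z ^ (d - 1) * (∑ j ∈ p.1.support, p.1 j * z ^ j)
        + ∑ j ∈ p.2.support, p.2 j * z ^ j) = Ev z (L d p.1 + p.2) := by
    intro p z hz
    rw [map_add, Ev_L d hd p.1 z hz, Ev_apply, Ev_apply]
  refine ⟨(F, C), ⟨hC, ?_⟩, ?_⟩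
  · intro z hz
    rw [key (F, C) z hz, hFC, Ev_apply]
  · rintro q ⟨hq1, hq2⟩
    have hq3 : ∀ z : ℂ, z ≠ 0 → Ev z (L d q.1 + q.2 - g) = 0 := by
      intro z hz
      rw [map_sub, sub_eq_zero, ← key q z hz, ← hq2 z hz, Ev_apply]
    have hqg : L d q.1 + q.2 = g := by
      have h0 := Ev_eq_zero hq3
      rwa [sub_eq_zero] at h0
    have h0 : L d (q.1 - F) + (q.2 - C) = 0 := by
      rw [map_sub]
      have : L d q.1 - L d F + (q.2 - C) = (L d q.1 + q.2) - (L d F + C) := by abel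
      rw [this, hqg, hFC, sub_self]
    have hsupp : (q.2 - C).support ⊆ Finset.Icc (-1 : ℤ) ((d : ℤ) - 2) :=
      Finsupp.support_sub.trans (Finset.union_subset hq1 hC)
    obtain ⟨he1, he2⟩ := L_inj d hd hsupp h0
    exact Prod.ext (sub_eq_zero.mp he1) (sub_eq_zero.mp he2)
end

section
/- Let d ≥ 1 be an integer and r > 0. For integers j with −1 ≤ j ≤ d−2 and k with 1 ≤ k ≤ d−1, define: Π_{0,j} = ∮_{|z|=r} z^{j} e^{−z^d} dz (counterclockwise circle), and Π_{k,j} = −∫_r^∞ t^{j} e^{−t^d} dt + ∫_0^{2πk/d} (re^{iθ})^{j} e^{−(re^{iθ})^d} · i re^{iθ} dθ + ∫_r^∞ (t e^{2πik/d})^{j} e^{−t^d} e^{2πik/d} dt (the improper integrals converge absolutely). Then the d×d complex matrix Π = (Π_{k,j})_{0 ≤ k ≤ d−1, −1 ≤ j ≤ d−2} is invertible (has nonzero determinant). -/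
open MeasureTheory Real

namespace PeriodMatrixAux

open Complex Set intervalIntegral Filter Topology

noncomputable section

/-- The radial integrand `t^m e^{-t^d}`. -/
def rad (d m : ℕ) (t : ℝ) : ℂ := (t : ℂ) ^ m * Complex.exp (-(t : ℂ) ^ d)

lemma rad_cast (d m : ℕ) (t : ℝ) :
    rad d m t = ((t ^ m * Real.exp (-t ^ d) : ℝ) : ℂ) := by
  simp [rad, Complex.ofReal_exp]

lemma integrableOn_rad (d m : ℕ) (hd : 1 ≤ d) {a : ℝ} (ha : 0 ≤ a) :
    IntegrableOn (rad d m) (Ioi a) := by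
  have h0 : IntegrableOn (fun t : ℝ => t ^ m * Real.exp (-t ^ d)) (Ioi 0) := by
    have h := integrableOn_rpow_mul_exp_neg_rpow (p := (d : ℝ)) (s := (m : ℝ))
      (by exact_mod_cast neg_one_lt_zero.trans_le (Nat.cast_nonneg m))
      (by exact_mod_cast hd)
    refine h.congr_fun (fun x hx => ?_) measurableSet_Ioi
    simp only [Real.rpow_natCast]
  have h1 : IntegrableOn (rad d m) (Ioi 0) := by
    rw [show rad d m = fun t => ((t ^ m * Real.exp (-t ^ d) : ℝ) : ℂ) from
      funext (rad_cast d m)]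
    exact h0.ofReal
  exact h1.mono_set (Ioi_subset_Ioi ha)

/-- The (real) value of the full integral. -/
def Gr (d m : ℕ) : ℝ := ∫ t in Ioi (0 : ℝ), t ^ m * Real.exp (-t ^ d)

lemma Gc_eq (d m : ℕ) : (∫ t in Ioi (0 : ℝ), rad d m t) = ((Gr d m : ℝ) : ℂ) := by
  rw [show rad d m = fun t => ((t ^ m * Real.exp (-t ^ d) : ℝ) : ℂ) from
    funext (rad_cast d m)]
  exact integral_ofReal

lemma Gr_pos (d m : ℕ) (hd : 1 ≤ d) : 0 < Gr d m := by
  have h0 : IntegrableOn (fun t : ℝ => t ^ m * Real.exp (-t ^ d)) (Ioi 0) := by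
    have h := integrableOn_rpow_mul_exp_neg_rpow (p := (d : ℝ)) (s := (m : ℝ))
      (by exact_mod_cast neg_one_lt_zero.trans_le (Nat.cast_nonneg m))
      (by exact_mod_cast hd)
    refine h.congr_fun (fun x hx => ?_) measurableSet_Ioi
    simp only [Real.rpow_natCast]
  rw [Gr]
  rw [setIntegral_pos_iff_support_of_nonneg_ae]
  · have : Ioi (0:ℝ) ⊆ Function.support (fun t : ℝ => t ^ m * Real.exp (-t ^ d)) := by
      intro x hx
      have hx' : (0:ℝ) < x := hx
      simp only [Function.mem_support]
      positivity
    have : Function.support (fun t : ℝ => t ^ m * Real.exp (-t ^ d)) ∩ Ioi 0 = Ioi 0 := by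
      rw [inter_eq_right]; exact this
    rw [this, Real.volume_Ioi]
    simp
  · refine (ae_restrict_iff' measurableSet_Ioi).mpr (ae_of_all _ fun x hx => ?_)
    have hx' : (0:ℝ) < x := hx
    positivity
  · exact h0

/-- The arc integral at radius `ρ`, from angle `0` to `φ`. -/
def arc (d m : ℕ) (φ ρ : ℝ) : ℂ :=
  ∫ θ in (0:ℝ)..φ, ((ρ : ℂ) * Complex.exp (θ * Complex.I)) ^ m
    * Complex.exp (-(((ρ : ℂ) * Complex.exp (θ * Complex.I))) ^ d)
    * (Complex.I * ρ * Complex.exp (θ * Complex.I))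

/-- The integrand transported through `z = exp w`. -/
def gg (d m : ℕ) (w : ℂ) : ℂ :=
  Complex.exp (((m : ℂ) + 1) * w) * Complex.exp (-Complex.exp ((d : ℂ) * w))

lemma gg_differentiable (d m : ℕ) : Differentiable ℂ (gg d m) := by
  unfold gg; fun_prop

lemma continuous_rad (d m : ℕ) : Continuous (rad d m) := by
  unfold rad; fun_prop

lemma gg_ofReal (d m : ℕ) (x : ℝ) :
    Real.exp x • rad d m (Real.exp x) = gg d m (x : ℂ) := by
  rw [rad, gg, Complex.real_smul, Complex.ofReal_exp, ← Complex.exp_nat_mul,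
    ← Complex.exp_nat_mul]
  rw [show Complex.exp ↑x * (Complex.exp ((m:ℂ) * ↑x) * Complex.exp (-Complex.exp ((d:ℂ) * ↑x)))
      = (Complex.exp ↑x * Complex.exp ((m:ℂ) * ↑x)) * Complex.exp (-Complex.exp ((d:ℂ) * ↑x)) from
    by ring, ← Complex.exp_add]
  congr 2
  ring

lemma gg_shift (d m : ℕ) (φ : ℝ) (hφ : Complex.exp ((d : ℂ) * ((φ:ℂ) * Complex.I)) = 1) (x : ℝ) :
    gg d m ((x : ℂ) + (φ:ℂ) * Complex.I)
      = Complex.exp (((m : ℂ) + 1) * ((φ:ℂ) * Complex.I)) * gg d m (x : ℂ) := by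
  rw [gg, gg, mul_add, Complex.exp_add, mul_add, Complex.exp_add, hφ, mul_one]
  ring

lemma arc_eq (d m : ℕ) (φ : ℝ) (c : ℝ) :
    arc d m φ (Real.exp c)
      = Complex.I • ∫ y in (0:ℝ)..φ, gg d m ((c : ℂ) + (y:ℂ) * Complex.I) := by
  rw [smul_eq_mul, ← intervalIntegral.integral_const_mul, arc]
  refine intervalIntegral.integral_congr fun θ _ => ?_
  rw [Complex.ofReal_exp, ← Complex.exp_add, ← Complex.exp_nat_mul, ← Complex.exp_nat_mul, gg]
  rw [show ((m:ℂ) + 1) * (↑c + ↑θ * Complex.I)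
      = (m:ℂ) * (↑c + ↑θ * Complex.I) + (↑c + ↑θ * Complex.I) from by ring, Complex.exp_add,
    show (↑c : ℂ) + ↑θ * Complex.I = ↑c + ↑θ * Complex.I from rfl]
  rw [Complex.exp_add]
  ring

/-- The Cauchy rectangle identity transported to the sector. -/
lemma rect (d m : ℕ) (φ : ℝ) (hφ : Complex.exp ((d : ℂ) * ((φ:ℂ) * Complex.I)) = 1) (a b : ℝ) :
    (1 - Complex.exp (((m : ℂ) + 1) * ((φ:ℂ) * Complex.I)))
        * (∫ t in Real.exp a..Real.exp b, rad d m t)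
      + arc d m φ (Real.exp b) - arc d m φ (Real.exp a) = 0 := by
  have H := Complex.integral_boundary_rect_eq_zero_of_differentiableOn (gg d m)
    (a : ℂ) ((b : ℂ) + (φ : ℂ) * Complex.I)
    ((gg_differentiable d m).differentiableOn)
  simp only [Complex.add_re, Complex.ofReal_re, Complex.mul_re, Complex.ofReal_im, Complex.I_re,
    Complex.I_im, Complex.add_im, Complex.mul_im, mul_zero, mul_one, zero_mul, sub_zero,
    zero_sub, zero_add, add_zero, neg_zero, Complex.ofReal_zero] at H
  -- now H should be about ∫ gg (x + 0*I) etc.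
  have hbot : (∫ x in a..b, gg d m ((x:ℂ))) = ∫ t in Real.exp a..Real.exp b, rad d m t := by
    rw [← intervalIntegral.integral_comp_smul_deriv (f := Real.exp) (f' := Real.exp)
      (g := rad d m) (fun x _ => Real.hasDerivAt_exp x) Real.continuous_exp.continuousOn
      (continuous_rad d m)]
    exact intervalIntegral.integral_congr fun x _ => (gg_ofReal d m x).symm
  have htop : (∫ x in a..b, gg d m ((x:ℂ) + (φ:ℂ) * Complex.I))
      = Complex.exp (((m : ℂ) + 1) * ((φ:ℂ) * Complex.I)) * ∫ x in a..b, gg d m ((x:ℂ)) := by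
    rw [← intervalIntegral.integral_const_mul]
    exact intervalIntegral.integral_congr fun x _ => gg_shift d m φ hφ x
  rw [arc_eq, arc_eq]
  rw [hbot, htop] at H
  linear_combination H + Complex.exp (((m:ℂ)+1) * ((φ:ℂ) * Complex.I)) * hbot

lemma split (d m : ℕ) (hd : 1 ≤ d) {a b : ℝ} (ha : 0 ≤ a) (hab : a ≤ b) :
    ∫ t in Ioi a, rad d m t = (∫ t in Ioc a b, rad d m t) + ∫ t in Ioi b, rad d m t := by
  rw [← MeasureTheory.setIntegral_union (Set.Ioc_disjoint_Ioi le_rfl) measurableSet_Ioi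
    (((integrableOn_rad d m hd ha)).mono_set Set.Ioc_subset_Ioi_self)
    ((integrableOn_rad d m hd (ha.trans hab)))]
  rw [Set.Ioc_union_Ioi_eq_Ioi hab]

lemma phi_const (d m : ℕ) (hd : 1 ≤ d) (φ : ℝ)
    (hφ : Complex.exp ((d : ℂ) * ((φ:ℂ) * Complex.I)) = 1)
    {ρ r : ℝ} (h0 : 0 < ρ) (hρr : ρ ≤ r) :
    (Complex.exp (((m : ℂ) + 1) * ((φ:ℂ) * Complex.I)) - 1) * (∫ t in Ioi ρ, rad d m t)
        + arc d m φ ρ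
      = (Complex.exp (((m : ℂ) + 1) * ((φ:ℂ) * Complex.I)) - 1) * (∫ t in Ioi r, rad d m t)
        + arc d m φ r := by
  have hr0 : 0 < r := lt_of_lt_of_le h0 hρr
  have H := rect d m φ hφ (Real.log ρ) (Real.log r)
  rw [Real.exp_log h0, Real.exp_log hr0] at H
  have hspl := split d m hd (a := ρ) (b := r) h0.le hρr
  rw [intervalIntegral.integral_of_le hρr] at H
  linear_combination (Complex.exp (((m : ℂ) + 1) * ((φ:ℂ) * Complex.I)) - 1) * hspl - H

lemma key (d m : ℕ) (hd : 1 ≤ d) (φ : ℝ)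
    (hφ : Complex.exp ((d : ℂ) * ((φ:ℂ) * Complex.I)) = 1)
    {r : ℝ} (hr : 0 < r) :
    (Complex.exp (((m : ℂ) + 1) * ((φ:ℂ) * Complex.I)) - 1) * (∫ t in Ioi r, rad d m t)
        + arc d m φ r
      = (Complex.exp (((m : ℂ) + 1) * ((φ:ℂ) * Complex.I)) - 1) * ((Gr d m : ℝ) : ℂ) := by
  set ω := Complex.exp (((m : ℂ) + 1) * ((φ:ℂ) * Complex.I)) with hω
  set Φ : ℝ → ℂ := fun ρ => (ω - 1) * (∫ t in Ioi ρ, rad d m t) + arc d m φ ρ with hΦ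
  -- small-interval integral tends to 0
  have hL0 : Tendsto (fun ρ => ∫ t in Ioc (0:ℝ) ρ, rad d m t) (𝓝[>] (0:ℝ)) (𝓝 0) := by
    have hbnd : ∀ᶠ ρ in 𝓝[>] (0:ℝ), ‖∫ t in Ioc (0:ℝ) ρ, rad d m t‖ ≤ ρ := by
      filter_upwards [Ioc_mem_nhdsGT (zero_lt_one : (0:ℝ) < 1)] with ρ hρ
      have hbd : ∀ t ∈ Ioc (0:ℝ) ρ, ‖rad d m t‖ ≤ 1 := by
        intro t ht
        rw [rad_cast]
        have h1 : t ^ m ≤ 1 := pow_le_one₀ ht.1.le (ht.2.trans hρ.2)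
        have h2 : Real.exp (-t ^ d) ≤ 1 := by
          rw [← Real.exp_zero]
          exact Real.exp_le_exp.mpr (neg_nonpos.mpr (pow_nonneg ht.1.le d))
        rw [Complex.norm_real, Real.norm_eq_abs,
          _root_.abs_of_nonneg (mul_nonneg (pow_nonneg ht.1.le m) (Real.exp_pos (-t ^ d)).le)]
        calc t ^ m * Real.exp (-t ^ d) ≤ 1 * 1 := by
              exact mul_le_mul h1 h2 (Real.exp_pos _).le zero_le_one
          _ = 1 := by ring
      calc ‖∫ t in Ioc (0:ℝ) ρ, rad d m t‖
          ≤ 1 * (volume (Ioc (0:ℝ) ρ)).toReal :=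
            norm_setIntegral_le_of_norm_le_const
              (by rw [Real.volume_Ioc]; exact ENNReal.ofReal_lt_top) hbd
        _ = ρ := by rw [Real.volume_Ioc, ENNReal.toReal_ofReal (by linarith [hρ.1])]; ring
    exact squeeze_zero_norm' hbnd
      ((continuous_id.tendsto (0:ℝ)).mono_left nhdsWithin_le_nhds)
  have hL : Tendsto (fun ρ => ∫ t in Ioi ρ, rad d m t) (𝓝[>] (0:ℝ)) (𝓝 ((Gr d m : ℝ) : ℂ)) := by
    have h1 : Tendsto (fun ρ => ((Gr d m : ℝ) : ℂ) - ∫ t in Ioc (0:ℝ) ρ, rad d m t)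
        (𝓝[>] (0:ℝ)) (𝓝 ((Gr d m : ℝ) : ℂ)) := by
      have := tendsto_const_nhds (x := ((Gr d m : ℝ) : ℂ)) (f := 𝓝[>] (0:ℝ)) |>.sub hL0
      simpa using this
    refine h1.congr' ?_
    filter_upwards [self_mem_nhdsWithin] with ρ (hρ : (0:ℝ) < ρ)
    have := split d m hd (a := (0:ℝ)) (b := ρ) le_rfl hρ.le
    rw [Gc_eq] at this
    linear_combination this
  have hA : Tendsto (fun ρ => arc d m φ ρ) (𝓝[>] (0:ℝ)) (𝓝 0) := by
    have hbnd : ∀ᶠ ρ in 𝓝[>] (0:ℝ), ‖arc d m φ ρ‖ ≤ ρ * (Real.exp 1 * |φ|) := by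
      filter_upwards [Ioc_mem_nhdsGT (zero_lt_one : (0:ℝ) < 1)] with ρ hρ
      have hbd : ∀ θ ∈ Set.uIoc (0:ℝ) φ,
          ‖((ρ : ℂ) * Complex.exp (θ * Complex.I)) ^ m
            * Complex.exp (-(((ρ : ℂ) * Complex.exp (θ * Complex.I))) ^ d)
            * (Complex.I * ρ * Complex.exp (θ * Complex.I))‖ ≤ ρ * Real.exp 1 := by
        intro θ _
        have habs1 : ‖(ρ:ℂ) * Complex.exp (θ * Complex.I)‖ = ρ := by
          rw [norm_mul, Complex.norm_real, Real.norm_eq_abs, Complex.norm_exp_ofReal_mul_I,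
            abs_of_pos hρ.1, mul_one]
        have hre : (-(((ρ : ℂ) * Complex.exp (θ * Complex.I))) ^ d).re ≤ 1 := by
          refine le_trans (Complex.re_le_norm _) ?_
          rw [norm_neg, norm_pow, habs1]
          exact pow_le_one₀ hρ.1.le hρ.2
        rw [norm_mul, norm_mul, norm_mul, norm_mul, norm_pow, habs1, Complex.norm_exp,
          Complex.norm_I, Complex.norm_real, Real.norm_eq_abs, Complex.norm_exp_ofReal_mul_I,
          abs_of_pos hρ.1, one_mul, mul_one]
        have e1 : ρ ^ m ≤ 1 := pow_le_one₀ hρ.1.le hρ.2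
        have e2 : Real.exp ((-(((ρ : ℂ) * Complex.exp (θ * Complex.I))) ^ d).re) ≤ Real.exp 1 :=
          Real.exp_le_exp.mpr hre
        calc ρ ^ m * Real.exp (-(((ρ : ℂ) * Complex.exp (θ * Complex.I))) ^ d).re * ρ
            ≤ 1 * Real.exp 1 * ρ :=
              mul_le_mul_of_nonneg_right
                (mul_le_mul e1 e2 (Real.exp_pos _).le zero_le_one) hρ.1.le
          _ = ρ * Real.exp 1 := by ring
      calc ‖arc d m φ ρ‖ ≤ ρ * Real.exp 1 * |φ - 0| :=
            intervalIntegral.norm_integral_le_of_norm_le_const hbd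
        _ = ρ * (Real.exp 1 * |φ|) := by rw [sub_zero]; ring
    have hg : Tendsto (fun ρ : ℝ => ρ * (Real.exp 1 * |φ|)) (𝓝[>] (0:ℝ)) (𝓝 0) := by
      have : Tendsto (fun ρ : ℝ => ρ * (Real.exp 1 * |φ|)) (𝓝 (0:ℝ))
          (𝓝 (0 * (Real.exp 1 * |φ|))) := (continuous_id.mul continuous_const).tendsto 0
      rw [zero_mul] at this
      exact this.mono_left nhdsWithin_le_nhds
    exact squeeze_zero_norm' hbnd hg
  have hlim : Tendsto Φ (𝓝[>] (0:ℝ)) (𝓝 ((ω - 1) * ((Gr d m : ℝ) : ℂ))) := by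
    have := (tendsto_const_nhds (x := ω - 1) (f := 𝓝[>] (0:ℝ))).mul hL |>.add hA
    simpa using this
  have hconst : ∀ᶠ ρ in 𝓝[>] (0:ℝ), Φ ρ = Φ r := by
    filter_upwards [Ioc_mem_nhdsGT hr] with ρ hρ
    exact phi_const d m hd φ hφ hρ.1 hρ.2
  have h2 : Tendsto (fun _ : ℝ => Φ r) (𝓝[>] (0:ℝ)) (𝓝 ((ω - 1) * ((Gr d m : ℝ) : ℂ))) :=
    hlim.congr' hconst
  have hfin := tendsto_nhds_unique (tendsto_const_nhds (x := Φ r) (f := 𝓝[>] (0:ℝ))) h2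
  simpa [hΦ] using hfin

/-- Evaluation of the row-`k` entries, `k ≠ 0`, `jj ≥ 1`. -/
lemma entry_eval (d : ℕ) (hd : 1 ≤ d) {r : ℝ} (hr : 0 < r) (k jj : ℕ) (hjj : 1 ≤ jj) :
    -(∫ t in Set.Ioi r, (t : ℂ) ^ ((jj : ℤ) - 1) * Complex.exp (-((t : ℂ) ^ d)))
      + (∫ θ in (0 : ℝ)..(2 * π * (k : ℕ) / d),
          ((r : ℂ) * Complex.exp (θ * Complex.I)) ^ ((jj : ℤ) - 1)
            * Complex.exp (-(((r : ℂ) * Complex.exp (θ * Complex.I)) ^ d))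
            * (Complex.I * r * Complex.exp (θ * Complex.I)))
      + (∫ t in Set.Ioi r,
          ((t : ℂ) * Complex.exp (2 * (π : ℂ) * Complex.I * (k : ℕ) / d)) ^ ((jj : ℤ) - 1)
            * Complex.exp (-((t : ℂ) ^ d))
            * Complex.exp (2 * (π : ℂ) * Complex.I * (k : ℕ) / d))
      = (Complex.exp (2 * (π : ℂ) * Complex.I * (k : ℕ) / d) ^ jj - 1) * ((Gr d (jj - 1) : ℝ) : ℂ) := by
  set m := jj - 1 with hm
  have hjm : jj = m + 1 := (Nat.succ_pred_eq_of_pos hjj).symm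
  have hdc : ((d:ℂ)) ≠ 0 := Nat.cast_ne_zero.mpr (by omega)
  have hz : ((jj : ℤ) - 1) = (m : ℤ) := by omega
  set E : ℂ := Complex.exp (2 * (π : ℂ) * Complex.I * (k : ℕ) / d) with hE
  set φ : ℝ := 2 * π * (k : ℕ) / d with hφdef
  have hφ1 : Complex.exp ((d : ℂ) * ((φ:ℂ) * Complex.I)) = 1 := by
    have h := Complex.exp_int_mul_two_pi_mul_I (k : ℤ)
    rw [show ((d : ℂ)) * ((φ:ℂ) * Complex.I) = ((k:ℤ) : ℂ) * (2 * ↑π * Complex.I) by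
      rw [hφdef]; push_cast; field_simp]
    exact h
  have hωE : Complex.exp (((m : ℂ) + 1) * ((φ:ℂ) * Complex.I)) = E ^ jj := by
    rw [hE, ← Complex.exp_nat_mul]
    congr 1
    rw [hφdef]; push_cast [hjm]; ring
  have h1 : (∫ t in Set.Ioi r, (t : ℂ) ^ ((jj : ℤ) - 1) * Complex.exp (-((t : ℂ) ^ d)))
      = ∫ t in Set.Ioi r, rad d m t := by
    refine setIntegral_congr_fun measurableSet_Ioi fun t _ => ?_
    rw [hz, zpow_natCast, rad]
  have h2 : (∫ t in Set.Ioi r,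
        ((t : ℂ) * E) ^ ((jj : ℤ) - 1) * Complex.exp (-((t : ℂ) ^ d)) * E)
      = E ^ jj * ∫ t in Set.Ioi r, rad d m t := by
    rw [← MeasureTheory.integral_const_mul]
    refine setIntegral_congr_fun measurableSet_Ioi fun t _ => ?_
    rw [hz, zpow_natCast, rad, mul_pow, hjm, pow_succ]
    ring
  have h3 : (∫ θ in (0 : ℝ)..(2 * π * (k : ℕ) / d),
        ((r : ℂ) * Complex.exp (θ * Complex.I)) ^ ((jj : ℤ) - 1)
          * Complex.exp (-(((r : ℂ) * Complex.exp (θ * Complex.I)) ^ d))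
          * (Complex.I * r * Complex.exp (θ * Complex.I)))
      = arc d m φ r := by
    rw [arc, hφdef]
    refine intervalIntegral.integral_congr fun θ _ => ?_
    rw [hz, zpow_natCast]
  have H := key d m hd φ hφ1 hr
  rw [hωE] at H
  rw [h1, h2, h3]
  linear_combination H

lemma row0_col0 (d : ℕ) (hd : 1 ≤ d) {r : ℝ} (hr : 0 < r) :
    (∮ z in C(0, r), z ^ (((0:ℕ) : ℤ) - 1) * Complex.exp (-(z ^ d)))
      = 2 * (π:ℝ) * Complex.I := by
  have hf : DiffContOnCl ℂ (fun z : ℂ => Complex.exp (-(z ^ d))) (Metric.ball 0 r) :=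
    Differentiable.diffContOnCl (by fun_prop)
  have h := hf.circleIntegral_sub_inv_smul (w := 0) (by simpa using hr)
  rw [show (fun z : ℂ => z ^ (((0:ℕ) : ℤ) - 1) * Complex.exp (-(z ^ d)))
      = fun z : ℂ => (z - 0)⁻¹ • Complex.exp (-(z ^ d)) from funext fun z => by
    norm_num [zpow_neg, smul_eq_mul]]
  rw [h, zero_pow (by omega : d ≠ 0), neg_zero, Complex.exp_zero, smul_eq_mul, mul_one]

lemma row0_pos (d : ℕ) (hd : 1 ≤ d) {r : ℝ} (hr : 0 < r) (jj : ℕ) (hjj : 1 ≤ jj) :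
    (∮ z in C(0, r), z ^ ((jj : ℤ) - 1) * Complex.exp (-(z ^ d))) = 0 := by
  set m := jj - 1 with hm
  have hz : ((jj : ℤ) - 1) = (m : ℤ) := by omega
  rw [show (fun z : ℂ => z ^ ((jj : ℤ) - 1) * Complex.exp (-(z ^ d)))
      = fun z : ℂ => z ^ m * Complex.exp (-(z ^ d)) from funext fun z => by
    rw [hz, zpow_natCast]]
  exact Complex.circleIntegral_eq_zero_of_differentiable_on_off_countable hr.le
    Set.countable_empty
    (Continuous.continuousOn (by fun_prop))
    (fun z _ => (by fun_prop : Differentiable ℂ fun z : ℂ => z ^ m * Complex.exp (-(z ^ d))).differentiableAt)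

/-- the `1 - ζ^{kl}` style matrix has nonzero determinant -/
lemma detW_ne_zero (n : ℕ) :
    (Matrix.of fun k j : Fin n =>
      Complex.exp (2 * (π:ℝ) * Complex.I / ((n+1 : ℕ) : ℂ)) ^ (((k:ℕ)+1) * ((j:ℕ)+1)) - 1).det
      ≠ 0 := by
  set ζ : ℂ := Complex.exp (2 * (π:ℝ) * Complex.I / ((n+1 : ℕ) : ℂ)) with hζ
  have hprim : IsPrimitiveRoot ζ (n+1) :=
    Complex.isPrimitiveRoot_exp (n+1) (Nat.succ_ne_zero n)
  set u : Fin (n+1) → ℂ := fun i => ζ ^ (i : ℕ) with hu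
  -- elementary column-operation matrix
  set Em : Matrix (Fin (n+1)) (Fin (n+1)) ℂ :=
    Matrix.of fun j l : Fin (n+1) => if j = l then 1 else if j = 0 then -1 else 0 with hEm
  have hEdet : Em.det = 1 := by
    have htri : Em.BlockTriangular id := by
      intro i j hij
      have h1 : i ≠ j := ne_of_gt hij
      have h2 : i ≠ 0 :=
        Fin.pos_iff_ne_zero.mp (lt_of_le_of_lt (Fin.zero_le j) hij)
      simp [hEm, h1, h2]
    rw [Matrix.det_of_upperTriangular htri]
    simp [hEm]
  have hVE : Matrix.vandermonde u * Em
      = Matrix.of (fun i l : Fin (n+1) =>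
          if l = 0 then 1 else ζ ^ ((i:ℕ) * (l:ℕ)) - 1) := by
    ext i l
    rw [Matrix.mul_apply]
    have hterm : ∀ j : Fin (n+1), Matrix.vandermonde u i j * Em j l
        = (if j = l then u i ^ (l:ℕ) else 0) + (if j = 0 ∧ l ≠ 0 then -1 else 0) := by
      intro j
      by_cases h1 : j = l
      · subst h1
        by_cases h2 : j = 0
        · simp [hEm, Matrix.vandermonde_apply, h2, hu]
        · simp [hEm, Matrix.vandermonde_apply, h2, hu]
      · by_cases h2 : j = 0
        · subst h2
          simp [hEm, Matrix.vandermonde_apply, h1, Ne.symm h1, hu]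
        · simp [hEm, Matrix.vandermonde_apply, h1, h2]
    rw [Finset.sum_congr rfl fun j _ => hterm j, Finset.sum_add_distrib]
    by_cases hl : l = 0
    · subst hl
      simp [hu]
    · have hs1 : (∑ j : Fin (n+1), if j = l then u i ^ (l:ℕ) else 0) = u i ^ (l:ℕ) := by
        simp
      have hs2 : (∑ j : Fin (n+1), if j = 0 ∧ l ≠ 0 then (-1:ℂ) else 0) = -1 := by
        simp only [hl, ne_eq, not_false_iff, and_true]
        simp
      rw [hs1, hs2, Matrix.of_apply, if_neg hl, hu, ← pow_mul]
      ring
  have hVdet : (Matrix.vandermonde u).det ≠ 0 := by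
    rw [Matrix.det_vandermonde]
    refine Finset.prod_ne_zero_iff.mpr fun i _ => Finset.prod_ne_zero_iff.mpr fun j hj => ?_
    rw [Finset.mem_Ioi] at hj
    refine sub_ne_zero.mpr fun h => ?_
    have hij := hprim.pow_inj j.isLt i.isLt h
    exact absurd (Fin.ext hij) (ne_of_gt hj)
  have h1 : (Matrix.vandermonde u * Em).det = (Matrix.vandermonde u).det := by
    rw [Matrix.det_mul, hEdet, mul_one]
  have h2 : (Matrix.vandermonde u * Em).det
      = (Matrix.of fun k j : Fin n => ζ ^ (((k:ℕ)+1) * ((j:ℕ)+1)) - 1).det := by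
    rw [hVE, Matrix.det_succ_row_zero]
    rw [Finset.sum_eq_single (0 : Fin (n+1))
      (fun j _ hj => by simp [Matrix.of_apply, hj])
      (fun h => absurd (Finset.mem_univ _) h)]
    have hsub : ((Matrix.of fun i l : Fin (n+1) =>
          if l = 0 then (1:ℂ) else ζ ^ ((i:ℕ) * (l:ℕ)) - 1).submatrix
            Fin.succ ((0 : Fin (n+1)).succAbove))
        = Matrix.of fun k j : Fin n => ζ ^ (((k:ℕ)+1) * ((j:ℕ)+1)) - 1 := by
      ext k j
      rw [Fin.succAbove_zero, Matrix.submatrix_apply, Matrix.of_apply, Matrix.of_apply,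
        if_neg (Fin.succ_ne_zero j), Fin.val_succ, Fin.val_succ]
    rw [hsub]
    simp
  rw [← h2, h1]
  exact hVdet

theorem main (d : ℕ) (hd : 1 ≤ d) (r : ℝ) (hr : 0 < r) :
    (Matrix.of fun k jj : Fin d =>
      if (k : ℕ) = 0 then
        (∮ z in C(0, r), z ^ ((jj : ℤ) - 1) * Complex.exp (-(z ^ d)))
      else
        -(∫ t in Set.Ioi r, (t : ℂ) ^ ((jj : ℤ) - 1) * Complex.exp (-((t : ℂ) ^ d)))
          + (∫ θ in (0 : ℝ)..(2 * π * (k : ℕ) / d),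
              ((r : ℂ) * Complex.exp (θ * Complex.I)) ^ ((jj : ℤ) - 1)
                * Complex.exp (-(((r : ℂ) * Complex.exp (θ * Complex.I)) ^ d))
                * (Complex.I * r * Complex.exp (θ * Complex.I)))
          + ∫ t in Set.Ioi r,
              ((t : ℂ) * Complex.exp (2 * (π : ℂ) * Complex.I * (k : ℕ) / d)) ^ ((jj : ℤ) - 1)
                * Complex.exp (-((t : ℂ) ^ d))
                * Complex.exp (2 * (π : ℂ) * Complex.I * (k : ℕ) / d)).det ≠ 0 := by
  obtain ⟨n, rfl⟩ : ∃ n, d = n + 1 := ⟨d - 1, by omega⟩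
  set ζ : ℂ := Complex.exp (2 * (π:ℝ) * Complex.I / ((n+1 : ℕ) : ℂ)) with hζ
  set A := Matrix.of fun k jj : Fin (n+1) =>
      if (k : ℕ) = 0 then
        (∮ z in C(0, r), z ^ ((jj : ℤ) - 1) * Complex.exp (-(z ^ (n+1))))
      else
        -(∫ t in Set.Ioi r, (t : ℂ) ^ ((jj : ℤ) - 1) * Complex.exp (-((t : ℂ) ^ (n+1))))
          + (∫ θ in (0 : ℝ)..(2 * π * (k : ℕ) / ((n+1 : ℕ) : ℝ)),
              ((r : ℂ) * Complex.exp (θ * Complex.I)) ^ ((jj : ℤ) - 1)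
                * Complex.exp (-(((r : ℂ) * Complex.exp (θ * Complex.I)) ^ (n+1)))
                * (Complex.I * r * Complex.exp (θ * Complex.I)))
          + ∫ t in Set.Ioi r,
              ((t : ℂ) * Complex.exp (2 * (π : ℂ) * Complex.I * (k : ℕ) / ((n+1 : ℕ) : ℂ)))
                  ^ ((jj : ℤ) - 1)
                * Complex.exp (-((t : ℂ) ^ (n+1)))
                * Complex.exp (2 * (π : ℂ) * Complex.I * (k : ℕ) / ((n+1 : ℕ) : ℂ)) with hA
  show A.det ≠ 0
  have hA0 : ∀ jj : Fin (n+1), A 0 jj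
      = if jj = 0 then (2 * (π:ℝ) * Complex.I : ℂ) else 0 := by
    intro jj
    rw [hA, Matrix.of_apply, if_pos (by simp)]
    by_cases hjj : jj = 0
    · subst hjj
      rw [if_pos rfl]
      exact row0_col0 (n+1) (by omega) hr
    · rw [if_neg hjj]
      have h1 : 1 ≤ (jj:ℕ) := Nat.one_le_iff_ne_zero.mpr
        (fun h => hjj (Fin.ext (by simpa using h)))
      exact row0_pos (n+1) (by omega) hr (jj:ℕ) h1
  have hAk : ∀ k jj : Fin (n+1), k ≠ 0 → jj ≠ 0 →
      A k jj = (ζ ^ ((k:ℕ) * (jj:ℕ)) - 1) * ((Gr (n+1) ((jj:ℕ) - 1) : ℝ) : ℂ) := by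
    intro k jj hk hjj
    have hk' : (k:ℕ) ≠ 0 := fun h => hk (Fin.ext (by simpa using h))
    have hjj' : 1 ≤ (jj:ℕ) := Nat.one_le_iff_ne_zero.mpr
      (fun h => hjj (Fin.ext (by simpa using h)))
    rw [hA, Matrix.of_apply, if_neg hk']
    have h := entry_eval (n+1) (by omega) hr (k:ℕ) (jj:ℕ) hjj'
    have hE : Complex.exp (2 * (π : ℂ) * Complex.I * ((k:ℕ) : ℂ) / ((n+1 : ℕ) : ℂ))
        = ζ ^ (k:ℕ) := by
      rw [hζ, ← Complex.exp_nat_mul]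
      congr 1
      ring
    rw [hE, ← pow_mul] at h
    rw [hE]
    exact h
  rw [Matrix.det_succ_row_zero]
  rw [Finset.sum_eq_single (0 : Fin (n+1))
    (fun j _ hj => by rw [hA0 j, if_neg hj]; ring)
    (fun h => absurd (Finset.mem_univ _) h)]
  rw [hA0 0, if_pos rfl]
  have hsubm : A.submatrix Fin.succ ((0 : Fin (n+1)).succAbove)
      = Matrix.of fun k j : Fin n =>
          ((Gr (n+1) (j:ℕ) : ℝ) : ℂ) * (ζ ^ (((k:ℕ)+1) * ((j:ℕ)+1)) - 1) := by
    ext k j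
    rw [Fin.succAbove_zero, Matrix.submatrix_apply,
      hAk k.succ j.succ (Fin.succ_ne_zero k) (Fin.succ_ne_zero j),
      Fin.val_succ, Fin.val_succ, Matrix.of_apply, Nat.add_sub_cancel]
    ring
  rw [hsubm, Matrix.det_mul_row (fun j : Fin n => ((Gr (n+1) (j:ℕ) : ℝ) : ℂ))
    (fun k j : Fin n => ζ ^ (((k:ℕ)+1) * ((j:ℕ)+1)) - 1)]
  have h2pi : (2 * (π:ℝ) * Complex.I : ℂ) ≠ 0 :=
    mul_ne_zero (mul_ne_zero two_ne_zero (Complex.ofReal_ne_zero.mpr Real.pi_ne_zero))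
      Complex.I_ne_zero
  have hGprod : (∏ j : Fin n, ((Gr (n+1) (j:ℕ) : ℝ) : ℂ)) ≠ 0 :=
    Finset.prod_ne_zero_iff.mpr fun j _ =>
      Complex.ofReal_ne_zero.mpr (Gr_pos (n+1) (j:ℕ) (by omega)).ne'
  have hW := detW_ne_zero n
  simp only [Fin.val_zero, pow_zero, one_mul]
  exact mul_ne_zero h2pi (mul_ne_zero hGprod hW)

end

end PeriodMatrixAux

/-- The `d × d` period matrix `Π` of the differentials `z^j e^{-z^d} dz`, `-1 ≤ j ≤ d-2`
(columns indexed by `jj : Fin d` with `j = jj - 1`), is nonsingular. Its row `k = 0`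
consists of the integrals over a counterclockwise circle `|z| = r` around the puncture at
`∞`; for `1 ≤ k ≤ d-1` the row `k` consists of the integrals along the path `γ_k` joining
the ramification point `w*_0` to `w*_k` (from `+∞` to `r` along the positive real axis,
counterclockwise along `|z| = r` from argument `0` to `2πk/d`, then out to `∞` along the
ray `arg z = 2πk/d`). -/
theorem period_matrix_nonsingular (d : ℕ) (hd : 1 ≤ d) (r : ℝ) (hr : 0 < r) :
    (Matrix.of fun k jj : Fin d =>
      if (k : ℕ) = 0 then
        (∮ z in C(0, r), z ^ ((jj : ℤ) - 1) * Complex.exp (-(z ^ d)))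
      else
        -(∫ t in Set.Ioi r, (t : ℂ) ^ ((jj : ℤ) - 1) * Complex.exp (-((t : ℂ) ^ d)))
          + (∫ θ in (0 : ℝ)..(2 * π * (k : ℕ) / d),
              ((r : ℂ) * Complex.exp (θ * Complex.I)) ^ ((jj : ℤ) - 1)
                * Complex.exp (-(((r : ℂ) * Complex.exp (θ * Complex.I)) ^ d))
                * (Complex.I * r * Complex.exp (θ * Complex.I)))
          + ∫ t in Set.Ioi r,
              ((t : ℂ) * Complex.exp (2 * (π : ℂ) * Complex.I * (k : ℕ) / d)) ^ ((jj : ℤ) - 1)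
                * Complex.exp (-((t : ℂ) ^ d))
                * Complex.exp (2 * (π : ℂ) * Complex.I * (k : ℕ) / d)).det ≠ 0 :=
  PeriodMatrixAux.main d hd r hr
end
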